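/- arXiv:0804.1887 — 4 statements merged into one kernel-verified Lean document; each statement's English description precedes it below -/
import Mathlib

section
/- Let g₁, g₂ : [0,1] → ℝ be monofractal functions with pointwise Hölder exponents constantly equal to H₁ and H₂ respectively, where 0 < H₁ < H₂ < 1. Then there is no continuous strictly increasing surjection f : [0,1] → [0,1] with g₁ = g₂ ∘ f. -/
open Set Filter Topology

/-- Pointwise Hölder exponent (for exponents `< 1` the polynomial is a constant). -/
noncomputable def holderExp (Z : ℝ → ℝ) (t : ℝ) : ℝ :=
  sSup {α : ℝ | 0 ≤ α ∧ ∃ C > (0:ℝ), ∃ δ > (0:ℝ), ∀ s, |s - t| < δ →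
    |Z s - Z t| ≤ C * |s - t| ^ α}

theorem stmt3 (g1 g2 : ℝ → ℝ) (H1 H2 : ℝ)
    (h1 : 0 < H1) (h12 : H1 < H2) (h2 : H2 < 1)
    (hg1 : ∀ t ∈ Icc (0:ℝ) 1, holderExp g1 t = H1)
    (hg2 : ∀ t ∈ Icc (0:ℝ) 1, holderExp g2 t = H2) :
    ¬ ∃ f : ℝ → ℝ, ContinuousOn f (Icc 0 1) ∧ StrictMonoOn f (Icc 0 1) ∧
      Set.MapsTo f (Icc 0 1) (Icc (0:ℝ) 1) ∧ Set.SurjOn f (Icc 0 1) (Icc (0:ℝ) 1) ∧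
      ∀ t ∈ Icc (0:ℝ) 1, g1 t = g2 (f t) := by
  rintro ⟨f, hcont, hmono, hmaps, hsurj, heq⟩
  -- monotone extension of f to all of ℝ
  set F : ℝ → ℝ := fun s => f (max 0 (min 1 s)) with hF
  have hproj : ∀ s : ℝ, max 0 (min 1 s) ∈ Icc (0:ℝ) 1 := by
    intro s
    constructor
    · exact le_max_left _ _
    · exact max_le (by norm_num) (min_le_left _ _)
  have hFmono : Monotone F := by
    intro a b hab
    exact hmono.monotoneOn (hproj a) (hproj b)
      (max_le_max le_rfl (min_le_min le_rfl hab))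
  have hFeq : ∀ s ∈ Icc (0:ℝ) 1, F s = f s := by
    intro s hs
    simp only [hF]
    rw [min_eq_right hs.2, max_eq_right hs.1]
  -- find a point of (0,1) where F is differentiable
  have hae : ∀ᵐ t ∂MeasureTheory.volume, DifferentiableAt ℝ F t :=
    hFmono.ae_differentiableAt
  have hae' : ∀ᵐ t ∂(MeasureTheory.volume.restrict (Ioo (0:ℝ) 1)),
      DifferentiableAt ℝ F t ∧ t ∈ Ioo (0:ℝ) 1 :=
    (MeasureTheory.ae_restrict_of_ae hae).and
      (MeasureTheory.ae_restrict_mem measurableSet_Ioo)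
  have hne : (MeasureTheory.volume.restrict (Ioo (0:ℝ) 1)) ≠ 0 := by
    intro h
    have := congrArg (fun μ : MeasureTheory.Measure ℝ => μ (Ioo (0:ℝ) 1)) h
    simp [MeasureTheory.Measure.restrict_apply_self, Real.volume_Ioo] at this
  haveI : (MeasureTheory.ae (MeasureTheory.volume.restrict (Ioo (0:ℝ) 1))).NeBot :=
    MeasureTheory.ae_neBot.2 hne
  obtain ⟨t, htdiff, htmem⟩ := hae'.exists
  have htIcc : t ∈ Icc (0:ℝ) 1 := ⟨le_of_lt htmem.1, le_of_lt htmem.2⟩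
  -- local Lipschitz bound at t
  obtain ⟨c, hc⟩ := (htdiff.hasFDerivAt.isBigO_sub).bound
  obtain ⟨δL, hδL, hLip⟩ := Metric.eventually_nhds_iff.1 hc
  set K : ℝ := max c 1 with hK
  have hKpos : (0:ℝ) < K := lt_of_lt_of_le one_pos (le_max_right _ _)
  have hLip' : ∀ s, |s - t| < δL → s ∈ Icc (0:ℝ) 1 → |f s - f t| ≤ K * |s - t| := by
    intro s hs hsIcc
    have h1 := hLip (y := s) (by rwa [Real.dist_eq])
    rw [hFeq s hsIcc, hFeq t htIcc] at h1
    simp only [Real.norm_eq_abs] at h1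
    calc |f s - f t| ≤ c * |s - t| := h1
      _ ≤ K * |s - t| := by
          apply mul_le_mul_of_nonneg_right (le_max_left _ _) (abs_nonneg _)
  -- pick α between H1 and H2
  set α : ℝ := (H1 + H2) / 2 with hα
  have hα1 : H1 < α := by simp only [hα]; linarith
  have hα2 : α < H2 := by simp only [hα]; linarith
  have hαpos : 0 < α := lt_trans h1 hα1
  -- get a Hölder bound for g2 at f t with exponent β > α
  have hft : f t ∈ Icc (0:ℝ) 1 := hmaps htIcc
  have hS2 := hg2 (f t) hft
  set S2 : Set ℝ := {a : ℝ | 0 ≤ a ∧ ∃ C > (0:ℝ), ∃ δ > (0:ℝ), ∀ s, |s - f t| < δ →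
    |g2 s - g2 (f t)| ≤ C * |s - f t| ^ a} with hS2def
  have hS2ne : S2.Nonempty := by
    by_contra hcon
    rw [Set.not_nonempty_iff_eq_empty] at hcon
    have : holderExp g2 (f t) = 0 := by
      simp only [holderExp, ← hS2def, hcon, Real.sSup_empty]
    rw [hS2] at this
    linarith
  have hlt : α < sSup S2 := by
    have : sSup S2 = H2 := hS2
    rw [this]; exact hα2
  obtain ⟨β, hβS2, hαβ⟩ := exists_lt_of_lt_csSup hS2ne hlt
  obtain ⟨hβ0, C, hC, δ2, hδ2, hg2bd⟩ := hβS2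
  -- show α belongs to the Hölder set of g1 at t
  set δ : ℝ := min δL (min (δ2 / K) (min t (min (1 - t) 1))) with hδ
  have hδpos : 0 < δ := by
    apply lt_min hδL
    apply lt_min (div_pos hδ2 hKpos)
    exact lt_min htmem.1 (lt_min (by linarith [htmem.2]) one_pos)
  have hmem : α ∈ {a : ℝ | 0 ≤ a ∧ ∃ C > (0:ℝ), ∃ δ > (0:ℝ), ∀ s, |s - t| < δ →
      |g1 s - g1 t| ≤ C * |s - t| ^ a} := by
    refine ⟨le_of_lt hαpos, C * K ^ β, mul_pos hC (Real.rpow_pos_of_pos hKpos β), δ, hδpos, ?_⟩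
    intro s hs
    have hsδL : |s - t| < δL := lt_of_lt_of_le hs (min_le_left _ _)
    have hsδ2K : |s - t| < δ2 / K :=
      lt_of_lt_of_le hs (le_trans (min_le_right _ _) (min_le_left _ _))
    have hst : |s - t| < t :=
      lt_of_lt_of_le hs (le_trans (min_le_right _ _) (le_trans (min_le_right _ _)
        (min_le_left _ _)))
    have hst1 : |s - t| < 1 - t :=
      lt_of_lt_of_le hs (le_trans (min_le_right _ _) (le_trans (min_le_right _ _)
        (le_trans (min_le_right _ _) (min_le_left _ _))))
    have hs1 : |s - t| < 1 :=
      lt_of_lt_of_le hs (le_trans (min_le_right _ _) (le_trans (min_le_right _ _)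
        (le_trans (min_le_right _ _) (min_le_right _ _))))
    have hsIcc : s ∈ Icc (0:ℝ) 1 := by
      constructor
      · nlinarith [abs_le.1 (le_of_lt hst)]
      · nlinarith [abs_le.1 (le_of_lt hst1)]
    have hfLip : |f s - f t| ≤ K * |s - t| := hLip' s hsδL hsIcc
    have hfδ2 : |f s - f t| < δ2 := by
      calc |f s - f t| ≤ K * |s - t| := hfLip
        _ < K * (δ2 / K) := by exact mul_lt_mul_of_pos_left hsδ2K hKpos
        _ = δ2 := by field_simp
    have hbd := hg2bd (f s) hfδ2
    rw [← heq s hsIcc, ← heq t htIcc] at hbd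
    by_cases hst0 : s = t
    · subst hst0
      simp only [sub_self, abs_zero]
      rw [Real.zero_rpow (ne_of_gt hαpos)]
      simp
    · have habs : 0 < |s - t| := abs_pos.2 (sub_ne_zero.2 hst0)
      calc |g1 s - g1 t| ≤ C * |f s - f t| ^ β := hbd
        _ ≤ C * (K * |s - t|) ^ β := by
            apply mul_le_mul_of_nonneg_left _ (le_of_lt hC)
            exact Real.rpow_le_rpow (abs_nonneg _) hfLip hβ0
        _ = C * (K ^ β * |s - t| ^ β) := by
            rw [Real.mul_rpow (le_of_lt hKpos) (abs_nonneg _)]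
        _ ≤ C * (K ^ β * |s - t| ^ α) := by
            apply mul_le_mul_of_nonneg_left _ (le_of_lt hC)
            apply mul_le_mul_of_nonneg_left _ (le_of_lt (Real.rpow_pos_of_pos hKpos β))
            exact Real.rpow_le_rpow_of_exponent_ge habs (le_of_lt hs1) (le_of_lt hαβ)
        _ = C * K ^ β * |s - t| ^ α := by ring
  -- conclude: sSup of the g1-set at t is H1 < α, contradiction
  have hS1 := hg1 t htIcc
  have hbdd : BddAbove {a : ℝ | 0 ≤ a ∧ ∃ C > (0:ℝ), ∃ δ > (0:ℝ), ∀ s, |s - t| < δ →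
      |g1 s - g1 t| ≤ C * |s - t| ^ a} := by
    by_contra hcon
    have : holderExp g1 t = 0 := Real.sSup_of_not_bddAbove hcon
    rw [hS1] at this
    linarith
  have : α ≤ holderExp g1 t := le_csSup hbdd hmem
  rw [hS1] at this
  linarith
end

section
/- Let Z : [0,1] → ℝ be continuous, H ∈ (0,1), and suppose (T_n)_{n≥1} is a nested sequence of finite partitions of [0,1] into non-trivial intervals with max_{T∈T_n}|T| → 0, such that each T ∈ T_n is contained in a unique T' ∈ T_{n−1} with |T'|^{1+ε_n} ≤ |T| ≤ |T'| for some sequence ε_n → 0. If there is a positive sequence κ_n → 0 with ω_T(Z) ≥ |T|^{H+κ_n} for every T ∈ T_n, then the pointwise Hölder exponent of Z satisfies h_Z(t) ≤ H for every t ∈ (0,1). -/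
open Set Filter Topology

/-- Oscillation of `Z` on a set `I`. -/
noncomputable def osc (Z : ℝ → ℝ) (I : Set ℝ) : ℝ := sSup (Z '' I) - sInf (Z '' I)

theorem stmt4 (Z : ℝ → ℝ) (hZ : ContinuousOn Z (Icc 0 1)) (H : ℝ) (hH : H ∈ Ioo (0:ℝ) 1)
    (T : ℕ → Finset (ℝ × ℝ)) (ε κ : ℕ → ℝ)
    -- each partition is made of non-trivial subintervals of [0,1]
    (hnt : ∀ n, ∀ p ∈ T n, p.1 < p.2)
    (hsub : ∀ n, ∀ p ∈ T n, Icc p.1 p.2 ⊆ Icc (0:ℝ) 1)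
    -- covering of [0,1]
    (hcover : ∀ n, (⋃ p ∈ T n, Icc p.1 p.2) = Icc (0:ℝ) 1)
    -- pairwise disjoint interiors
    (hdisj : ∀ n, ∀ p ∈ T n, ∀ q ∈ T n, p ≠ q → Ioo p.1 p.2 ∩ Ioo q.1 q.2 = ∅)
    -- maximal diameters tend to 0
    (hmax : ∀ δ > (0:ℝ), ∃ N, ∀ n ≥ N, ∀ p ∈ T n, p.2 - p.1 ≤ δ)
    -- nestedness: each interval of T (n+1) is included in a unique interval of T n,
    -- with comparable sizes
    (hnest : ∀ n, ∀ p ∈ T (n+1), ∃! q, q ∈ T n ∧ Icc p.1 p.2 ⊆ Icc q.1 q.2 ∧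
      (q.2 - q.1) ^ (1 + ε (n+1)) ≤ p.2 - p.1 ∧ p.2 - p.1 ≤ q.2 - q.1)
    (hεpos : ∀ n, 0 ≤ ε n) (hε : Tendsto ε atTop (𝓝 0))
    (hκpos : ∀ n, 0 < κ n) (hκ : Tendsto κ atTop (𝓝 0))
    -- lower bound on oscillations
    (hosc : ∀ n, ∀ p ∈ T n, (p.2 - p.1) ^ (H + κ n) ≤ osc Z (Icc p.1 p.2)) :
    ∀ t ∈ Ioo (0:ℝ) 1, holderExp Z t ≤ H := by

  intro t ht
  have ht01 : t ∈ Icc (0:ℝ) 1 := ⟨ht.1.le, ht.2.le⟩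
  refine Real.sSup_le ?_ hH.1.le
  rintro α ⟨hα0, C, hC, δ, hδ, hHold⟩
  by_contra hcon
  push_neg at hcon
  set γ : ℝ := (α - H)/2 with hγdef
  have hγ : 0 < γ := by simp only [hγdef]; linarith
  obtain ⟨N1, hN1⟩ := eventually_atTop.mp (hκ.eventually_lt_const hγ)
  set η0 : ℝ := (1/(1+2*C)) ^ (γ⁻¹ : ℝ) with hη0def
  have hbase : (0:ℝ) < 1/(1+2*C) := by positivity
  have hη0pos : 0 < η0 := Real.rpow_pos_of_pos hbase _
  have hη0le1 : η0 ≤ 1 := Real.rpow_le_one hbase.le (by rw [div_le_one (by linarith)]; linarith) (by positivity)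
  have hη0γ : η0 ^ (γ : ℝ) = 1/(1+2*C) := Real.rpow_inv_rpow hbase.le hγ.ne'
  set η : ℝ := min η0 (δ/2) with hηdef
  have hηpos : 0 < η := lt_min hη0pos (by linarith)
  obtain ⟨N2, hN2⟩ := hmax η hηpos
  set n := max N1 N2 with hn
  have htcov : t ∈ ⋃ p ∈ T n, Icc p.1 p.2 := by rw [hcover n]; exact ht01
  obtain ⟨p, hp, htp⟩ := mem_iUnion₂.mp htcov
  set L : ℝ := p.2 - p.1 with hLdef
  have hL0 : 0 < L := sub_pos.mpr (hnt n p hp)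
  have hLη : L ≤ η := hN2 n (le_max_right _ _) p hp
  have hL1 : L ≤ 1 := hLη.trans ((min_le_left _ _).trans hη0le1)
  have hLδ : L < δ := lt_of_le_of_lt (hLη.trans (min_le_right _ _)) (by linarith)
  have key : ∀ s ∈ Icc p.1 p.2, |Z s - Z t| ≤ C * L ^ α := by
    intro s hs
    have hst : |s - t| ≤ L := by
      rw [abs_sub_le_iff]
      constructor <;> [skip; skip] <;>
        · have h1 := hs.1; have h2 := hs.2; have h3 := htp.1; have h4 := htp.2; linarith
    calc |Z s - Z t| ≤ C * |s - t| ^ α := hHold s (hst.trans_lt hLδ)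
      _ ≤ C * L ^ α := by
          exact mul_le_mul_of_nonneg_left (Real.rpow_le_rpow (abs_nonneg _) hst hα0) hC.le
  have hne : (Z '' Icc p.1 p.2).Nonempty := ⟨Z t, t, htp, rfl⟩
  have hosc_ub : osc Z (Icc p.1 p.2) ≤ 2*C*L^α := by
    have h1 : sSup (Z '' Icc p.1 p.2) ≤ Z t + C*L^α := by
      apply csSup_le hne
      rintro y ⟨s, hs, rfl⟩
      have := abs_le.mp (key s hs); linarith [this.2]
    have h2 : Z t - C*L^α ≤ sInf (Z '' Icc p.1 p.2) := by
      apply le_csInf hne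
      rintro y ⟨s, hs, rfl⟩
      have := abs_le.mp (key s hs); linarith [this.1]
    unfold osc; linarith
  have hlow := hosc n p hp
  have hκn : κ n < γ := hN1 n (le_max_left _ _)
  have h3 : L ^ (α - γ) ≤ L ^ (H + κ n) :=
    Real.rpow_le_rpow_of_exponent_ge hL0 hL1 (by simp only [hγdef]; linarith)
  have h4 : L ^ (α - γ) ≤ 2*C*L^α := le_trans h3 (le_trans hlow hosc_ub)
  rw [Real.rpow_sub hL0] at h4
  have hLαpos : (0:ℝ) < L ^ α := Real.rpow_pos_of_pos hL0 _
  have hLγpos : (0:ℝ) < L ^ γ := Real.rpow_pos_of_pos hL0 _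
  have h5 : (1:ℝ) ≤ 2*C*L^γ := by
    rw [div_le_iff₀ hLγpos] at h4
    nlinarith [hLαpos, hLγpos, h4]
  have h6 : L ^ (γ:ℝ) ≤ 1/(1+2*C) := by
    calc L ^ (γ:ℝ) ≤ η0 ^ (γ:ℝ) :=
          Real.rpow_le_rpow hL0.le (hLη.trans (min_le_left _ _)) hγ.le
      _ = 1/(1+2*C) := hη0γ
  have h7 : 2*C*L^γ ≤ 2*C*(1/(1+2*C)) := mul_le_mul_of_nonneg_left h6 (by linarith)
  have h8 : 2*C*(1/(1+2*C)) < 1 := by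
    rw [mul_one_div, div_lt_one (by linarith)]; linarith
  linarith
end

section
/- Let 0 < α < 1, C > 1, and let Z : [0,1] → ℝ be continuous with C^{-1}·2^{-jα} ≤ ω_{j,k}(Z) ≤ C·2^{-jα} for every j ≥ 1 and 0 ≤ k ≤ 2^j−1. Then the sequence H_j(Z), defined by ∑_{k=0}^{2^j−1}(ω_{j,k}(Z))^{1/H_j(Z)} = 1, converges to α; moreover there is a constant C' such that |H_j(Z) − α| ≤ C'/j for all j large enough. -/
open Set Filter Topology

/-- Oscillation of `Z` on the dyadic interval `[k 2^{-j}, (k+1) 2^{-j}]`. -/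
noncomputable def dyadicOsc (Z : ℝ → ℝ) (j k : ℕ) : ℝ :=
  osc Z (Icc ((k : ℝ) / 2 ^ j) (((k : ℝ) + 1) / 2 ^ j))

theorem stmt12 (α C : ℝ) (hα : α ∈ Ioo (0:ℝ) 1) (hC : 1 < C)
    (Z : ℝ → ℝ) (hZ : ContinuousOn Z (Icc 0 1))
    (hosc : ∀ j : ℕ, 1 ≤ j → ∀ k < 2 ^ j,
      C⁻¹ * (2:ℝ) ^ (-(j:ℝ) * α) ≤ dyadicOsc Z j k ∧
      dyadicOsc Z j k ≤ C * (2:ℝ) ^ (-(j:ℝ) * α))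
    (Hfun : ℕ → ℝ)
    (hH : ∀ j : ℕ, 1 ≤ j → 0 < Hfun j ∧
      ∑ k ∈ Finset.range (2 ^ j), dyadicOsc Z j k ^ (1 / Hfun j) = 1) :
    Tendsto Hfun atTop (𝓝 α) ∧
    ∃ C' > (0:ℝ), ∃ J : ℕ, ∀ j ≥ J, |Hfun j - α| ≤ C' / (j : ℝ) := by
  have hL2 : 0 < Real.log 2 := Real.log_pos one_lt_two
  have hLC : 0 < Real.log C := Real.log_pos hC
  have hCpos : (0:ℝ) < C := lt_trans one_pos hC
  set C' : ℝ := Real.log C / Real.log 2 with hC'def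
  have hC'pos : 0 < C' := div_pos hLC hL2
  have key : ∀ j : ℕ, 1 ≤ j → |Hfun j - α| ≤ C' / (j : ℝ) := by
    intro j hj
    obtain ⟨hHpos, hsum⟩ := hH j hj
    have hjr : (1:ℝ) ≤ (j:ℝ) := by exact_mod_cast hj
    have hjpos : (0:ℝ) < (j:ℝ) := lt_of_lt_of_le one_pos hjr
    set p : ℝ := 1 / Hfun j with hpdef
    have hppos : 0 < p := by positivity
    set a : ℝ := C⁻¹ * (2:ℝ) ^ (-(j:ℝ) * α) with hadef
    set b : ℝ := C * (2:ℝ) ^ (-(j:ℝ) * α) with hbdef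
    have hrpos : (0:ℝ) < (2:ℝ) ^ (-(j:ℝ) * α) := Real.rpow_pos_of_pos two_pos _
    have hapos : 0 < a := by positivity
    have hbpos : 0 < b := by positivity
    have hcard : (2:ℝ) ^ j * a ^ p = ∑ _k ∈ Finset.range (2 ^ j), a ^ p := by
      rw [Finset.sum_const, Finset.card_range, nsmul_eq_mul]
      push_cast
      ring
    have hcardb : (∑ _k ∈ Finset.range (2 ^ j), b ^ p) = (2:ℝ) ^ j * b ^ p := by
      rw [Finset.sum_const, Finset.card_range, nsmul_eq_mul]
      push_cast
      ring
    have hlow : (2:ℝ) ^ j * a ^ p ≤ 1 := by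
      calc (2:ℝ) ^ j * a ^ p = ∑ _k ∈ Finset.range (2 ^ j), a ^ p := hcard
        _ ≤ ∑ k ∈ Finset.range (2 ^ j), dyadicOsc Z j k ^ p :=
            Finset.sum_le_sum fun k hk =>
              Real.rpow_le_rpow hapos.le (hosc j hj k (Finset.mem_range.mp hk)).1 hppos.le
        _ = 1 := hsum
    have hup : 1 ≤ (2:ℝ) ^ j * b ^ p := by
      calc (1:ℝ) = ∑ k ∈ Finset.range (2 ^ j), dyadicOsc Z j k ^ p := hsum.symm
        _ ≤ ∑ _k ∈ Finset.range (2 ^ j), b ^ p :=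
            Finset.sum_le_sum fun k hk => by
              have h1 := hosc j hj k (Finset.mem_range.mp hk)
              exact Real.rpow_le_rpow (le_trans hapos.le h1.1) h1.2 hppos.le
        _ = (2:ℝ) ^ j * b ^ p := hcardb
    have hloga : Real.log a = -Real.log C + (-(j:ℝ) * α) * Real.log 2 := by
      rw [hadef, Real.log_mul (by positivity) (ne_of_gt hrpos), Real.log_inv,
        Real.log_rpow two_pos]
    have hlogb : Real.log b = Real.log C + (-(j:ℝ) * α) * Real.log 2 := by
      rw [hbdef, Real.log_mul (ne_of_gt hCpos) (ne_of_gt hrpos), Real.log_rpow two_pos]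
    have h1 : (j:ℝ) * Real.log 2 + p * Real.log a ≤ 0 := by
      have := Real.log_nonpos (by positivity) hlow
      rwa [Real.log_mul (by positivity) (ne_of_gt (Real.rpow_pos_of_pos hapos p)),
        Real.log_pow, Real.log_rpow hapos] at this
    have h2 : 0 ≤ (j:ℝ) * Real.log 2 + p * Real.log b := by
      have := Real.log_nonneg hup
      rwa [Real.log_mul (by positivity) (ne_of_gt (Real.rpow_pos_of_pos hbpos p)),
        Real.log_pow, Real.log_rpow hbpos] at this
    have hpH : p * Hfun j = 1 := one_div_mul_cancel (ne_of_gt hHpos)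
    rw [hloga] at h1
    rw [hlogb] at h2
    have hm1 := mul_le_mul_of_nonneg_left h1 hHpos.le
    have hm2 := mul_nonneg hHpos.le h2
    rw [abs_sub_le_iff]
    have hgoal : C' / (j:ℝ) = Real.log C / (Real.log 2 * (j:ℝ)) := by
      rw [hC'def, div_div]
    have e1 : Hfun j * ((j:ℝ) * Real.log 2 + p * (-Real.log C + -(j:ℝ) * α * Real.log 2)) =
        Hfun j * (j:ℝ) * Real.log 2 - (Real.log C + (j:ℝ) * α * Real.log 2) := by
      rw [hpdef]; field_simp; ring
    have e2 : Hfun j * ((j:ℝ) * Real.log 2 + p * (Real.log C + -(j:ℝ) * α * Real.log 2)) =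
        Hfun j * (j:ℝ) * Real.log 2 + (Real.log C - (j:ℝ) * α * Real.log 2) := by
      rw [hpdef]; field_simp; ring
    rw [e1] at hm1
    rw [e2] at hm2
    rw [mul_zero] at hm1
    constructor
    · rw [hgoal, le_div_iff₀ (by positivity)]
      have : (Hfun j - α) * (Real.log 2 * (j:ℝ)) =
          Hfun j * (j:ℝ) * Real.log 2 - (j:ℝ) * α * Real.log 2 := by ring
      linarith [hm1, this.le, this.ge]
    · rw [hgoal, le_div_iff₀ (by positivity)]
      have : (α - Hfun j) * (Real.log 2 * (j:ℝ)) =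
          (j:ℝ) * α * Real.log 2 - Hfun j * (j:ℝ) * Real.log 2 := by ring
      linarith [hm2, this.le, this.ge]
  have habs : Tendsto (fun j : ℕ => |Hfun j - α|) atTop (𝓝 0) :=
    squeeze_zero' (Eventually.of_forall fun j => abs_nonneg _)
      (eventually_atTop.mpr ⟨1, key⟩) (tendsto_const_div_atTop_nhds_zero_nat C')
  constructor
  · rw [tendsto_iff_dist_tendsto_zero]
    simpa [Real.dist_eq] using habs
  · exact ⟨C', hC'pos, 1, fun j hj => key j hj⟩
end

section
/- Let C > 1, β > 1, and let μ be a Borel probability measure on [0,1] with μ(I_{j,k}) > 0 for all dyadic intervals. Suppose Z : [0,1] → ℝ is continuous with C^{-1}·μ(I_{j,k})^{1/β} ≤ ω_{j,k}(Z) ≤ C·μ(I_{j,k})^{1/β} for all j,k, and that there is M ≥ 1 with 2^{-jM} ≤ μ(I_{j,k}) ≤ 2^{-j/M} for all large j. Then H_j(Z) → 1/β as j → ∞, where H_j(Z) is defined by ∑_{k=0}^{2^j−1}(ω_{j,k}(Z))^{1/H_j(Z)} = 1; in particular the intrinsic exponent H(Z) = liminf_j H_j(Z) equals 1/β. -/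
open Set Filter Topology MeasureTheory

/-- Mass of the dyadic interval `[k 2^{-j}, (k+1) 2^{-j}]`. -/
noncomputable def dyadicMass (μ : Measure ℝ) (j k : ℕ) : ℝ :=
  (μ (Icc ((k : ℝ) / 2 ^ j) (((k : ℝ) + 1) / 2 ^ j))).toReal

open scoped ENNReal NNReal

lemma one_le_sum_mass (μ : Measure ℝ) [IsProbabilityMeasure μ] (hμsupp : μ (Icc 0 1) = 1)
    (j : ℕ) : 1 ≤ ∑ k ∈ Finset.range (2 ^ j), dyadicMass μ j k := by
  have h2 : (0:ℝ) < 2 ^ j := by positivity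
  have hcover : Icc (0:ℝ) 1 ⊆ ⋃ k ∈ Finset.range (2 ^ j),
      Icc ((k : ℝ) / 2 ^ j) (((k : ℝ) + 1) / 2 ^ j) := by
    intro x hx
    obtain ⟨hx0, hx1⟩ := hx
    set k := min (⌊x * 2 ^ j⌋₊) (2 ^ j - 1) with hk
    have hkmem : k < 2 ^ j := by
      have : 2 ^ j - 1 < 2 ^ j := Nat.sub_lt (by positivity) one_pos
      exact lt_of_le_of_lt (min_le_right _ _) this
    refine mem_biUnion (Finset.mem_range.2 hkmem) ?_
    constructor
    · have h1n : k ≤ ⌊x * 2 ^ j⌋₊ := min_le_left _ _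
      have h1 : (k : ℝ) ≤ ⌊x * 2 ^ j⌋₊ := by exact_mod_cast h1n
      have h2' : (⌊x * 2 ^ j⌋₊ : ℝ) ≤ x * 2 ^ j :=
        Nat.floor_le (by positivity)
      rw [div_le_iff₀ h2]
      · push_cast at h1 ⊢
        linarith
    · rcases le_or_gt (⌊x * 2 ^ j⌋₊) (2 ^ j - 1) with h | h
      · have hk' : k = ⌊x * 2 ^ j⌋₊ := min_eq_left h
        have : x * 2 ^ j < ⌊x * 2 ^ j⌋₊ + 1 := Nat.lt_floor_add_one _
        rw [le_div_iff₀ h2, hk']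
        push_cast at this ⊢
        linarith
      · -- floor ≥ 2^j, so x ≥ 1, so x = 1
        have hk' : k = 2 ^ j - 1 := min_eq_right h.le
        have hge : (2:ℕ) ^ j ≤ ⌊x * 2 ^ j⌋₊ := by omega
        rw [le_div_iff₀ h2, hk']
        have : ((2:ℕ)^j : ℝ) ≤ x * 2 ^ j := by
          calc ((2:ℕ)^j : ℝ) ≤ (⌊x * 2 ^ j⌋₊ : ℝ) := by exact_mod_cast hge
          _ ≤ x * 2 ^ j := Nat.floor_le (by positivity)
        have hx1' : x = 1 := le_antisymm hx1 (by
          push_cast at this; nlinarith)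
        have h1le : (1:ℕ) ≤ 2 ^ j := Nat.one_le_two_pow
        push_cast [hx1', Nat.cast_sub h1le]
        ring_nf
        nlinarith
  have hle : (1 : ℝ≥0∞) ≤ ∑ k ∈ Finset.range (2 ^ j),
      μ (Icc ((k : ℝ) / 2 ^ j) (((k : ℝ) + 1) / 2 ^ j)) := by
    calc (1:ℝ≥0∞) = μ (Icc 0 1) := hμsupp.symm
    _ ≤ μ (⋃ k ∈ Finset.range (2 ^ j), Icc ((k : ℝ) / 2 ^ j) (((k : ℝ) + 1) / 2 ^ j)) :=
        measure_mono hcover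
    _ ≤ _ := measure_biUnion_finset_le _ _
  have hfin : ∀ k ∈ Finset.range (2^j),
      μ (Icc ((k : ℝ) / 2 ^ j) (((k : ℝ) + 1) / 2 ^ j)) ≠ ∞ :=
    fun k _ => (measure_lt_top μ _).ne
  have := ENNReal.toReal_mono (ENNReal.sum_lt_top.2 (fun k hk => (measure_lt_top μ _))).ne hle
  simpa [ENNReal.toReal_sum hfin, dyadicMass] using this

lemma sum_mass_le_two (μ : Measure ℝ) [IsProbabilityMeasure μ] (j : ℕ) :
    ∑ k ∈ Finset.range (2 ^ j), dyadicMass μ j k ≤ 2 := by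
  have h2 : (0:ℝ) < 2 ^ j := by positivity
  have hsplit : ∀ k, dyadicMass μ j k ≤
      (μ (Ico ((k : ℝ) / 2 ^ j) (((k : ℝ) + 1) / 2 ^ j))).toReal
      + (μ {(((k : ℝ) + 1) / 2 ^ j)}).toReal := by
    intro k
    have hsub : Icc ((k : ℝ) / 2 ^ j) (((k : ℝ) + 1) / 2 ^ j) ⊆
        Ico ((k : ℝ) / 2 ^ j) (((k : ℝ) + 1) / 2 ^ j) ∪ {(((k : ℝ) + 1) / 2 ^ j)} := by
      intro x hx
      rcases lt_or_eq_of_le hx.2 with h | h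
      · exact Or.inl ⟨hx.1, h⟩
      · exact Or.inr h
    have h := ((measure_mono (μ := μ) hsub)).trans (measure_union_le _ _)
    rw [dyadicMass, ← ENNReal.toReal_add (measure_lt_top μ _).ne (measure_lt_top μ _).ne]
    exact ENNReal.toReal_mono (by finiteness) h
  have hIco : ∑ k ∈ Finset.range (2 ^ j),
      (μ (Ico ((k : ℝ) / 2 ^ j) (((k : ℝ) + 1) / 2 ^ j))).toReal ≤ 1 := by
    have hdisj : (↑(Finset.range (2 ^ j)) : Set ℕ).PairwiseDisjoint
        (fun k : ℕ => Ico ((k : ℝ) / 2 ^ j) (((k : ℝ) + 1) / 2 ^ j)) := by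
      intro a _ b _ hab
      rcases hab.lt_or_gt with h | h
      · refine Ico_disjoint_Ico.2 ?_
        refine le_trans (min_le_left _ _) (le_trans ?_ (le_max_right _ _))
        rw [div_le_div_iff_of_pos_right h2]
        exact_mod_cast Nat.succ_le_of_lt h
      · refine Ico_disjoint_Ico.2 ?_
        refine le_trans (min_le_right _ _) (le_trans ?_ (le_max_left _ _))
        rw [div_le_div_iff_of_pos_right h2]
        exact_mod_cast Nat.succ_le_of_lt h
    have hmeq : ∑ k ∈ Finset.range (2 ^ j),
        μ (Ico ((k : ℝ) / 2 ^ j) (((k : ℝ) + 1) / 2 ^ j))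
        = μ (⋃ k ∈ Finset.range (2 ^ j), Ico ((k : ℝ) / 2 ^ j) (((k : ℝ) + 1) / 2 ^ j)) :=
      (measure_biUnion_finset hdisj (fun k _ => measurableSet_Ico)).symm
    have h1 : μ (⋃ k ∈ Finset.range (2 ^ j),
        Ico ((k : ℝ) / 2 ^ j) (((k : ℝ) + 1) / 2 ^ j)) ≤ 1 := prob_le_one (μ := μ) (s := _)
    calc ∑ k ∈ Finset.range (2 ^ j),
        (μ (Ico ((k : ℝ) / 2 ^ j) (((k : ℝ) + 1) / 2 ^ j))).toReal
        = (∑ k ∈ Finset.range (2 ^ j),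
            μ (Ico ((k : ℝ) / 2 ^ j) (((k : ℝ) + 1) / 2 ^ j))).toReal :=
          (ENNReal.toReal_sum (fun k _ => (measure_lt_top μ _).ne)).symm
      _ ≤ (1 : ℝ≥0∞).toReal := ENNReal.toReal_mono ENNReal.one_ne_top (hmeq ▸ h1)
      _ = 1 := by simp
  have hpt : ∑ k ∈ Finset.range (2 ^ j), (μ {(((k : ℝ) + 1) / 2 ^ j)}).toReal ≤ 1 := by
    have hdisj : (↑(Finset.range (2 ^ j)) : Set ℕ).PairwiseDisjoint
        (fun k : ℕ => ({(((k : ℝ) + 1) / 2 ^ j)} : Set ℝ)) := by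
      intro a _ b _ hab
      simp only [Set.disjoint_singleton]
      intro h
      apply hab
      field_simp at h
      exact_mod_cast add_right_cancel h
    have hmeq : ∑ k ∈ Finset.range (2 ^ j), μ ({(((k : ℝ) + 1) / 2 ^ j)} : Set ℝ)
        = μ (⋃ k ∈ Finset.range (2 ^ j), ({(((k : ℝ) + 1) / 2 ^ j)} : Set ℝ)) :=
      (measure_biUnion_finset hdisj (fun k _ => measurableSet_singleton _)).symm
    calc ∑ k ∈ Finset.range (2 ^ j), (μ ({(((k : ℝ) + 1) / 2 ^ j)} : Set ℝ)).toReal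
        = (∑ k ∈ Finset.range (2 ^ j), μ ({(((k : ℝ) + 1) / 2 ^ j)} : Set ℝ)).toReal :=
          (ENNReal.toReal_sum (fun k _ => (measure_lt_top μ _).ne)).symm
      _ ≤ (1 : ℝ≥0∞).toReal := ENNReal.toReal_mono ENNReal.one_ne_top (hmeq ▸ prob_le_one (μ := μ) (s := _))
      _ = 1 := by simp
  calc ∑ k ∈ Finset.range (2 ^ j), dyadicMass μ j k
      ≤ ∑ k ∈ Finset.range (2 ^ j),
        ((μ (Ico ((k : ℝ) / 2 ^ j) (((k : ℝ) + 1) / 2 ^ j))).toReal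
          + (μ {(((k : ℝ) + 1) / 2 ^ j)}).toReal) :=
        Finset.sum_le_sum (fun k _ => hsplit k)
    _ = _ + _ := Finset.sum_add_distrib
    _ ≤ 1 + 1 := add_le_add hIco hpt
    _ = 2 := by norm_num

lemma two_rpow_nat (c : ℝ) (j : ℕ) : (2:ℝ) ^ ((j:ℝ) * c) = ((2:ℝ) ^ c) ^ j := by
  rw [mul_comm, Real.rpow_mul (by norm_num), Real.rpow_natCast]

lemma term_upper (C β M ε : ℝ) (hC : 1 < C) (hβ0 : 0 < β) (hM0 : 0 < M)
    (hε0 : 0 < ε) (j : ℕ) (m w : ℝ) (hm0 : 0 < m)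
    (hmle : m ≤ (2:ℝ) ^ (-(j:ℝ)/M)) (hw0 : 0 ≤ w) (hw : w ≤ C * m ^ (1/β)) :
    w ^ (β + ε) ≤ C ^ (β + ε) * ((((2:ℝ) ^ (-(ε/(M*β)))) ^ j) * m) := by
  have hC0 : (0:ℝ) < C := one_pos.trans hC
  have h1 : w ^ (β + ε) ≤ (C * m ^ (1/β)) ^ (β + ε) :=
    Real.rpow_le_rpow hw0 hw (by linarith)
  have h2 : (C * m ^ (1/β)) ^ (β + ε) = C ^ (β + ε) * m ^ (1 + ε/β) := by
    rw [Real.mul_rpow hC0.le (Real.rpow_nonneg hm0.le _), ← Real.rpow_mul hm0.le]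
    congr 1
    field_simp
  have h3 : m ^ (1 + ε/β) = m * m ^ (ε/β) := by
    rw [Real.rpow_add hm0, Real.rpow_one]
  have h4 : m ^ (ε/β) ≤ ((2:ℝ) ^ (-(j:ℝ)/M)) ^ (ε/β) :=
    Real.rpow_le_rpow hm0.le hmle (by positivity)
  have h5 : ((2:ℝ) ^ (-(j:ℝ)/M)) ^ (ε/β) = (((2:ℝ) ^ (-(ε/(M*β)))) ^ j) := by
    rw [← Real.rpow_mul (by norm_num : (0:ℝ) ≤ 2), ← two_rpow_nat]
    congr 1
    field_simp
  calc w ^ (β + ε) ≤ C ^ (β + ε) * (m * m ^ (ε/β)) := by rw [← h3, ← h2]; exact h1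
    _ ≤ C ^ (β + ε) * (m * (((2:ℝ) ^ (-(ε/(M*β)))) ^ j)) := by
        have : m * m ^ (ε/β) ≤ m * (((2:ℝ) ^ (-(ε/(M*β)))) ^ j) := by
          rw [← h5]; exact mul_le_mul_of_nonneg_left h4 hm0.le
        exact mul_le_mul_of_nonneg_left this (by positivity)
    _ = C ^ (β + ε) * ((((2:ℝ) ^ (-(ε/(M*β)))) ^ j) * m) := by ring

lemma term_lower (C β M ε : ℝ) (hC : 1 < C) (hβ0 : 0 < β) (hM0 : 0 < M)
    (hε0 : 0 < ε) (hεβ : ε < β) (j : ℕ) (m w : ℝ) (hm0 : 0 < m)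
    (hmle : m ≤ (2:ℝ) ^ (-(j:ℝ)/M)) (hw : C⁻¹ * m ^ (1/β) ≤ w) :
    (C ^ (β - ε))⁻¹ * ((((2:ℝ) ^ (ε/(M*β))) ^ j) * m) ≤ w ^ (β - ε) := by
  have hC0 : (0:ℝ) < C := one_pos.trans hC
  have hlow0 : (0:ℝ) ≤ C⁻¹ * m ^ (1/β) := by positivity
  have h1 : (C⁻¹ * m ^ (1/β)) ^ (β - ε) ≤ w ^ (β - ε) :=
    Real.rpow_le_rpow hlow0 hw (by linarith)
  have h2 : (C⁻¹ * m ^ (1/β)) ^ (β - ε) = (C ^ (β - ε))⁻¹ * m ^ (1 - ε/β) := by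
    rw [Real.mul_rpow (by positivity) (Real.rpow_nonneg hm0.le _),
      Real.inv_rpow hC0.le, ← Real.rpow_mul hm0.le]
    congr 2
    field_simp
  have h3 : m ^ (1 - ε/β) = m * m ^ (-(ε/β)) := by
    rw [show (1 - ε/β) = 1 + (-(ε/β)) by ring, Real.rpow_add hm0, Real.rpow_one]
  have h4 : ((2:ℝ) ^ (-(j:ℝ)/M)) ^ (-(ε/β)) ≤ m ^ (-(ε/β)) :=
    Real.rpow_le_rpow_of_nonpos hm0 hmle (neg_nonpos.2 (by positivity))
  have h5 : ((2:ℝ) ^ (-(j:ℝ)/M)) ^ (-(ε/β)) = (((2:ℝ) ^ (ε/(M*β))) ^ j) := by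
    rw [← Real.rpow_mul (by norm_num : (0:ℝ) ≤ 2), ← two_rpow_nat]
    congr 1
    field_simp
  calc (C ^ (β - ε))⁻¹ * ((((2:ℝ) ^ (ε/(M*β))) ^ j) * m)
      = (C ^ (β - ε))⁻¹ * (m * (((2:ℝ) ^ (-(j:ℝ)/M)) ^ (-(ε/β)))) := by rw [h5]; ring
    _ ≤ (C ^ (β - ε))⁻¹ * (m * m ^ (-(ε/β))) := by
        have := mul_le_mul_of_nonneg_left h4 hm0.le
        exact mul_le_mul_of_nonneg_left this (by positivity)
    _ = (C⁻¹ * m ^ (1/β)) ^ (β - ε) := by rw [h2, h3]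
    _ ≤ w ^ (β - ε) := h1

theorem stmt19 (C β : ℝ) (hC : 1 < C) (hβ : 1 < β)
    (μ : Measure ℝ) [IsProbabilityMeasure μ] (hμsupp : μ (Icc 0 1) = 1)
    (hpos : ∀ j : ℕ, ∀ k < 2 ^ j, 0 < dyadicMass μ j k)
    (M : ℝ) (hM : 1 ≤ M)
    (hMbound : ∃ J : ℕ, ∀ j ≥ J, ∀ k < 2 ^ j,
      (2:ℝ) ^ (-(j:ℝ) * M) ≤ dyadicMass μ j k ∧ dyadicMass μ j k ≤ (2:ℝ) ^ (-(j:ℝ) / M))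
    (Z : ℝ → ℝ) (hZ : ContinuousOn Z (Icc 0 1))
    (hosc : ∀ j : ℕ, ∀ k < 2 ^ j,
      C⁻¹ * dyadicMass μ j k ^ (1 / β) ≤ dyadicOsc Z j k ∧
      dyadicOsc Z j k ≤ C * dyadicMass μ j k ^ (1 / β))
    (Hfun : ℕ → ℝ)
    (hH : ∀ j : ℕ, 1 ≤ j → 0 < Hfun j ∧
      ∑ k ∈ Finset.range (2 ^ j), dyadicOsc Z j k ^ (1 / Hfun j) = 1) :
    Tendsto Hfun atTop (𝓝 (1 / β)) ∧ liminf Hfun atTop = 1 / β := by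
  obtain ⟨J, hJ⟩ := hMbound
  have hC0 : (0:ℝ) < C := one_pos.trans hC
  have hβ0 : (0:ℝ) < β := one_pos.trans hβ
  have hM0 : (0:ℝ) < M := lt_of_lt_of_le one_pos hM
  -- oscillations are positive
  have hwpos : ∀ j : ℕ, ∀ k < 2 ^ j, 0 < dyadicOsc Z j k := by
    intro j k hk
    have hm := hpos j k hk
    have h0 : 0 < C⁻¹ * dyadicMass μ j k ^ (1 / β) := by positivity
    exact h0.trans_le (hosc j k hk).1
  -- eventually all oscillations are ≤ 1
  have hdecay : ∀ c : ℝ, 0 < c → Tendsto (fun j : ℕ => ((2:ℝ) ^ (-c)) ^ j) atTop (𝓝 0) := by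
    intro c hc
    exact _root_.tendsto_pow_atTop_nhds_zero_of_lt_one (by positivity)
      (Real.rpow_lt_one_of_one_lt_of_neg one_lt_two (by linarith))
  have hwle1 : ∀ᶠ j in atTop, ∀ k < 2 ^ j, dyadicOsc Z j k ≤ 1 := by
    have hc : (0:ℝ) < 1 / (M * β) := by positivity
    have hd := (hdecay _ hc).const_mul C
    rw [mul_zero] at hd
    have h := hd.eventually_le_const (show (0:ℝ) < 1 by norm_num)
    filter_upwards [h, eventually_ge_atTop J] with j hj hjJ
    intro k hk
    have hm := (hJ j hjJ k hk).2
    have hmul : dyadicOsc Z j k ≤ C * ((2:ℝ) ^ (-(j:ℝ)/M)) ^ (1/β) := by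
      refine (hosc j k hk).2.trans ?_
      exact mul_le_mul_of_nonneg_left
        (Real.rpow_le_rpow (hpos j k hk).le hm (by positivity)) hC0.le
    have heq : ((2:ℝ) ^ (-(j:ℝ)/M)) ^ (1/β) = ((2:ℝ) ^ (-(1/(M*β)))) ^ j := by
      rw [← Real.rpow_mul (by norm_num : (0:ℝ) ≤ 2), ← two_rpow_nat]
      congr 1
      field_simp
    rw [heq] at hmul
    exact hmul.trans hj
  -- main convergence of 1/Hfun to β
  have key : Tendsto (fun j => 1 / Hfun j) atTop (𝓝 β) := by
    rw [tendsto_order]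
    constructor
    · intro a ha
      rcases le_or_gt a 0 with h0 | h0
      · filter_upwards [eventually_ge_atTop 1] with j hj
        exact lt_of_le_of_lt h0 (one_div_pos.2 (hH j hj).1)
      · set ε := β - a with hεdef
        have hε0 : 0 < ε := by simp only [hεdef]; linarith
        have hεβ : ε < β := by simp only [hεdef]; linarith
        have hc0 : 0 < ε / (M * β) := by positivity
        have hgrow : Tendsto (fun j : ℕ => ((2:ℝ) ^ (ε/(M*β))) ^ j) atTop atTop := by
          apply tendsto_pow_atTop_atTop_of_one_lt
          rw [show (1:ℝ) = (2:ℝ) ^ (0:ℝ) by simp]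
          exact Real.rpow_lt_rpow_of_exponent_lt one_lt_two hc0
        filter_upwards [hgrow.eventually_gt_atTop (C ^ (β - ε)), eventually_ge_atTop J,
          eventually_ge_atTop 1, hwle1] with j hjgrow hjJ hj1 hjw1
      -- suppose 1/Hfun j ≤ a = β - ε, derive contradiction
        by_contra hcon
        push_neg at hcon
        obtain ⟨hHpos, hsum1⟩ := hH j hj1
        have haeq : a = β - ε := by simp only [hεdef]; ring
        have hfle : ∑ k ∈ Finset.range (2 ^ j), dyadicOsc Z j k ^ (β - ε) ≤ 1 := by
          rw [← hsum1]
          refine Finset.sum_le_sum fun k hk => ?_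
          have hk' := Finset.mem_range.1 hk
          exact Real.rpow_le_rpow_of_exponent_ge (hwpos j k hk') (hjw1 k hk')
            (haeq ▸ hcon)
        have hfgt : 1 < ∑ k ∈ Finset.range (2 ^ j), dyadicOsc Z j k ^ (β - ε) := by
          have hterm : ∀ k ∈ Finset.range (2 ^ j),
              (C ^ (β - ε))⁻¹ * ((((2:ℝ) ^ (ε/(M*β))) ^ j) * dyadicMass μ j k)
                ≤ dyadicOsc Z j k ^ (β - ε) := by
            intro k hk
            have hk' := Finset.mem_range.1 hk
            exact term_lower C β M ε hC hβ0 hM0 hε0 hεβ j _ _ (hpos j k hk')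
              (hJ j hjJ k hk').2 (hosc j k hk').1
          have hsum_ge : 1 ≤ ∑ k ∈ Finset.range (2 ^ j), dyadicMass μ j k :=
            one_le_sum_mass μ hμsupp j
          calc (1:ℝ) < (C ^ (β - ε))⁻¹ * ((((2:ℝ) ^ (ε/(M*β))) ^ j) * 1) := by
                rw [mul_one, ← div_lt_iff₀' (by positivity)]
                simpa [one_div] using hjgrow
            _ ≤ (C ^ (β - ε))⁻¹ * ((((2:ℝ) ^ (ε/(M*β))) ^ j) *
                  ∑ k ∈ Finset.range (2 ^ j), dyadicMass μ j k) := by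
                gcongr
            _ = ∑ k ∈ Finset.range (2 ^ j),
                  (C ^ (β - ε))⁻¹ * ((((2:ℝ) ^ (ε/(M*β))) ^ j) * dyadicMass μ j k) := by
                rw [Finset.mul_sum, Finset.mul_sum]
            _ ≤ _ := Finset.sum_le_sum hterm
        linarith
    · intro b hb
      set ε := b - β with hεdef
      have hε0 : 0 < ε := by simp only [hεdef]; linarith
      have hc0 : 0 < ε / (M * β) := by positivity
      have hdec := (hdecay _ hc0).const_mul (2 * C ^ (β + ε))
      rw [mul_zero] at hdec
      have hev := hdec.eventually_lt_const (show (0:ℝ) < 1 by norm_num)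
      filter_upwards [hev, eventually_ge_atTop J, eventually_ge_atTop 1, hwle1]
        with j hjdec hjJ hj1 hjw1
      by_contra hcon
      push_neg at hcon
      obtain ⟨hHpos, hsum1⟩ := hH j hj1
      have hbeq : b = β + ε := by simp only [hεdef]; ring
      have hfge : 1 ≤ ∑ k ∈ Finset.range (2 ^ j), dyadicOsc Z j k ^ (β + ε) := by
        rw [← hsum1]
        refine Finset.sum_le_sum fun k hk => ?_
        have hk' := Finset.mem_range.1 hk
        exact Real.rpow_le_rpow_of_exponent_ge (hwpos j k hk') (hjw1 k hk')
          (hbeq ▸ hcon)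
      have hflt : ∑ k ∈ Finset.range (2 ^ j), dyadicOsc Z j k ^ (β + ε) < 1 := by
        have hterm : ∀ k ∈ Finset.range (2 ^ j),
            dyadicOsc Z j k ^ (β + ε) ≤
              C ^ (β + ε) * ((((2:ℝ) ^ (-(ε/(M*β)))) ^ j) * dyadicMass μ j k) := by
          intro k hk
          have hk' := Finset.mem_range.1 hk
          exact term_upper C β M ε hC hβ0 hM0 hε0 j _ _ (hpos j k hk')
            (hJ j hjJ k hk').2 (hwpos j k hk').le (hosc j k hk').2
        have hsum_le : ∑ k ∈ Finset.range (2 ^ j), dyadicMass μ j k ≤ 2 :=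
          sum_mass_le_two μ j
        calc ∑ k ∈ Finset.range (2 ^ j), dyadicOsc Z j k ^ (β + ε)
            ≤ ∑ k ∈ Finset.range (2 ^ j),
                C ^ (β + ε) * ((((2:ℝ) ^ (-(ε/(M*β)))) ^ j) * dyadicMass μ j k) :=
              Finset.sum_le_sum hterm
          _ = C ^ (β + ε) * ((((2:ℝ) ^ (-(ε/(M*β)))) ^ j) *
                ∑ k ∈ Finset.range (2 ^ j), dyadicMass μ j k) := by
              rw [Finset.mul_sum, Finset.mul_sum]
          _ ≤ C ^ (β + ε) * ((((2:ℝ) ^ (-(ε/(M*β)))) ^ j) * 2) := by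
              gcongr
          _ = 2 * C ^ (β + ε) * (((2:ℝ) ^ (-(ε/(M*β)))) ^ j) := by ring
          _ < 1 := hjdec
      linarith
  -- conclude
  have hβne : β ≠ 0 := ne_of_gt hβ0
  have hHtend : Tendsto Hfun atTop (𝓝 (1 / β)) := by
    have hinv : Tendsto (fun j => (1 / Hfun j)⁻¹) atTop (𝓝 β⁻¹) := key.inv₀ hβne
    have heq : ∀ᶠ j in atTop, (1 / Hfun j)⁻¹ = Hfun j := by
      filter_upwards [eventually_ge_atTop 1] with j hj
      rw [one_div, inv_inv]
    rw [show (1:ℝ)/β = β⁻¹ by rw [one_div]]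
    exact Tendsto.congr' heq hinv
  exact ⟨hHtend, hHtend.liminf_eq⟩
end
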